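/- For an integer ℓ ≥ 2 let g_ℓ(u) := √3·u^ℓ / √((u+2)(6−5u)³) (defined for real u near 1) and set ξ_ℓ := (1/(12^ℓ·(ℓ−1)!)) · g_ℓ^{(ℓ−1)}(1), where g_ℓ^{(ℓ−1)} denotes the (ℓ−1)-st derivative. Then ξ_ℓ = 12^{−ℓ} · Σ_{j=0}^{ℓ−1} Σ_{i=0}^{ℓ−1−j} C(ℓ, ℓ−1−i−j) · B(−1/2, i) · B(−3/2, j) · 3^{−i} · (−5)^j, where C(n,k) is the ordinary binomial coefficient and B(α,i) := (∏_{t=0}^{i−1}(α−t))/i! is the generalized binomial coefficient. -/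

import Mathlib

open Real Nat Finset

/-- The function `g_ℓ(u) = √3·u^ℓ/√((u+2)(6−5u)³)`. -/
noncomputable def g (ℓ : ℕ) (u : ℝ) : ℝ :=
  Real.sqrt 3 * u ^ ℓ / Real.sqrt ((u + 2) * (6 - 5 * u) ^ 3)

/-- `ξ_ℓ`, the limiting probability that the root face of a random rooted planar map
is a pure `ℓ`-gon. -/
noncomputable def xi (ℓ : ℕ) : ℝ :=
  1 / ((12 : ℝ) ^ ℓ * ((ℓ - 1)! : ℝ)) * iteratedDeriv (ℓ - 1) (g ℓ) 1

/-- The generalized binomial coefficient `B(α, i) = α(α−1)⋯(α−i+1)/i!`. -/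
noncomputable def genBinom (α : ℝ) (i : ℕ) : ℝ :=
  (∏ t ∈ Finset.range i, (α - t)) / i !

noncomputable def famA (ℓ k : ℕ) (x : ℝ) : ℝ := (ℓ.descFactorial k : ℝ) * x ^ (ℓ - k)

noncomputable def famB (i : ℕ) (x : ℝ) : ℝ :=
  (∏ t ∈ Finset.range i, (-1 / 2 - (t : ℝ))) * (x + 2) ^ (-1 / 2 - (i : ℝ))

noncomputable def famC (j : ℕ) (x : ℝ) : ℝ :=
  (∏ t ∈ Finset.range j, (-3 / 2 - (t : ℝ))) * (-5 : ℝ) ^ j * (6 - 5 * x) ^ (-3 / 2 - (j : ℝ))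

noncomputable def innerFam (m : ℕ) (x : ℝ) : ℝ :=
  ∑ i ∈ Finset.range (m + 1), (m.choose i : ℝ) * (famB i x * famC (m - i) x)

noncomputable def fullFam (ℓ m : ℕ) (x : ℝ) : ℝ :=
  Real.sqrt 3 * ∑ k ∈ Finset.range (m + 1), (m.choose k : ℝ) * (famA ℓ k x * innerFam (m - k) x)

lemma famA_deriv (ℓ k : ℕ) (x : ℝ) : HasDerivAt (famA ℓ k) (famA ℓ (k + 1) x) x := by
  unfold famA
  rcases le_or_gt ℓ k with h | h
  · have h0 : ℓ - k = 0 := by omega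
    have h1 : ℓ.descFactorial (k + 1) = 0 := Nat.descFactorial_eq_zero_iff_lt.2 (by omega)
    simp only [h0, h1, pow_zero, Nat.cast_zero, zero_mul, mul_one]
    exact hasDerivAt_const x _
  · have h2 := (hasDerivAt_pow (ℓ - k) x).const_mul ((ℓ.descFactorial k : ℝ))
    refine h2.congr_deriv (Eq.symm ?_)
    rw [Nat.descFactorial_succ, show ℓ - (k + 1) = ℓ - k - 1 by omega]
    push_cast
    ring

lemma famB_deriv (i : ℕ) {x : ℝ} (hx : 0 < x + 2) :
    HasDerivAt (famB i) (famB (i + 1) x) x := by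
  have h1 : HasDerivAt (fun y : ℝ => y + 2) 1 x := (hasDerivAt_id x).add_const 2
  have h2 := (Real.hasDerivAt_rpow_const (x := x + 2) (p := -1 / 2 - (i : ℝ))
    (Or.inl hx.ne')).comp x h1
  have h3 := h2.const_mul (∏ t ∈ Finset.range i, (-1 / 2 - (t : ℝ)))
  refine h3.congr_deriv (Eq.symm ?_)
  unfold famB
  rw [Finset.prod_range_succ]
  push_cast
  rw [show (-1 / 2 - ((i : ℝ) + 1)) = (-1 / 2 - (i : ℝ)) - 1 by ring]
  ring

lemma famC_deriv (j : ℕ) {x : ℝ} (hx : 0 < 6 - 5 * x) :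
    HasDerivAt (famC j) (famC (j + 1) x) x := by
  have h1 : HasDerivAt (fun y : ℝ => 6 - 5 * y) (-(5 * 1)) x :=
    ((hasDerivAt_id x).const_mul (5 : ℝ)).const_sub 6
  have h2 := (Real.hasDerivAt_rpow_const (x := 6 - 5 * x) (p := -3 / 2 - (j : ℝ))
    (Or.inl hx.ne')).comp x h1
  have h3 := h2.const_mul ((∏ t ∈ Finset.range j, (-3 / 2 - (t : ℝ))) * (-5 : ℝ) ^ j)
  refine h3.congr_deriv (Eq.symm ?_)
  unfold famC
  rw [Finset.prod_range_succ, pow_succ]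
  push_cast
  rw [show (-3 / 2 - ((j : ℝ) + 1)) = (-3 / 2 - (j : ℝ)) - 1 by ring]
  ring

lemma star_deriv {A B : ℕ → ℝ → ℝ} {x : ℝ}
    (hA : ∀ m, HasDerivAt (A m) (A (m + 1) x) x)
    (hB : ∀ m, HasDerivAt (B m) (B (m + 1) x) x) (n : ℕ) :
    HasDerivAt (fun y => ∑ k ∈ Finset.range (n + 1), (n.choose k : ℝ) * (A k y * B (n - k) y))
      (∑ k ∈ Finset.range (n + 1 + 1), ((n + 1).choose k : ℝ) * (A k x * B (n + 1 - k) x)) x := by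
  have h : HasDerivAt
      (fun y => ∑ k ∈ Finset.range (n + 1), (n.choose k : ℝ) * (A k y * B (n - k) y))
      (∑ k ∈ Finset.range (n + 1), (n.choose k : ℝ) *
        (A (k + 1) x * B (n - k) x + A k x * B (n - k + 1) x)) x := by
    apply HasDerivAt.fun_sum
    intro k _
    exact ((hA k).mul (hB (n - k))).const_mul _
  convert h using 1
  have e1 : ∀ k ∈ Finset.range (n + 1), (n.choose k : ℝ) *
      (A (k + 1) x * B (n - k) x + A k x * B (n - k + 1) x)
      = (n.choose k : ℝ) * (A (k + 1) x * B (n - k) x)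
        + (n.choose k : ℝ) * (A k x * B (n + 1 - k) x) := by
    intro k hk
    rw [show n - k + 1 = n + 1 - k by have := Finset.mem_range.1 hk; omega]
    ring
  rw [Finset.sum_congr rfl e1, Finset.sum_add_distrib]
  rw [Finset.sum_range_succ' (fun k => ((n + 1).choose k : ℝ) * (A k x * B (n + 1 - k) x)) (n + 1)]
  simp only [Nat.succ_sub_succ, Nat.choose_succ_succ, Nat.cast_add, Nat.choose_zero_right,
    Nat.cast_one, Nat.sub_zero, one_mul, add_mul]
  rw [Finset.sum_add_distrib]
  rw [Finset.sum_range_succ' (fun k => ((n).choose k : ℝ) * (A k x * B (n + 1 - k) x)) n]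
  have e2 : ∑ k ∈ Finset.range (n + 1), ((n).choose (k + 1) : ℝ) * (A (k + 1) x * B (n - k) x)
      = ∑ k ∈ Finset.range n, ((n).choose (k + 1) : ℝ) * (A (k + 1) x * B (n - k) x) := by
    rw [Finset.sum_range_succ, Nat.choose_succ_self]
    simp
  rw [e2]
  simp only [Nat.succ_sub_succ, Nat.choose_zero_right, Nat.cast_one, Nat.sub_zero, one_mul]
  ring

lemma innerFam_deriv (m : ℕ) {x : ℝ} (hx1 : 0 < x + 2) (hx2 : 0 < 6 - 5 * x) :
    HasDerivAt (innerFam m) (innerFam (m + 1) x) x := by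
  exact
    star_deriv (fun i => famB_deriv i hx1) (fun j => famC_deriv j hx2) m

lemma fullFam_deriv (ℓ m : ℕ) {x : ℝ} (hx : x ∈ Set.Ioo (0 : ℝ) (6 / 5)) :
    HasDerivAt (fullFam ℓ m) (fullFam ℓ (m + 1) x) x := by
  have hx1 : 0 < x + 2 := by have := hx.1; linarith
  have hx2 : 0 < 6 - 5 * x := by have := hx.2; linarith
  have h := (star_deriv (A := famA ℓ) (B := innerFam) (fun k => famA_deriv ℓ k x)
    (fun m => innerFam_deriv m hx1 hx2) m).const_mul (Real.sqrt 3)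
  exact h

lemma iteratedDeriv_fullFam (ℓ n : ℕ) :
    ∀ x ∈ Set.Ioo (0 : ℝ) (6 / 5), iteratedDeriv n (fullFam ℓ 0) x = fullFam ℓ n x := by
  induction n with
  | zero => intro x _; simp [iteratedDeriv_zero]
  | succ n ih =>
    intro x hx
    rw [iteratedDeriv_succ]
    have h1 : iteratedDeriv n (fullFam ℓ 0) =ᶠ[nhds x] fullFam ℓ n :=
      Filter.eventuallyEq_of_mem (isOpen_Ioo.mem_nhds hx) ih
    rw [h1.deriv_eq]
    exact (fullFam_deriv ℓ n hx).deriv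

lemma g_eq_fullFam (ℓ : ℕ) : ∀ x ∈ Set.Ioo (0 : ℝ) (6 / 5), g ℓ x = fullFam ℓ 0 x := by
  intro x hx
  have hx1 : (0 : ℝ) < x + 2 := by have := hx.1; linarith
  have hx2 : (0 : ℝ) < 6 - 5 * x := by have := hx.2; linarith
  have hful : fullFam ℓ 0 x =
      Real.sqrt 3 * (x ^ ℓ * ((x + 2) ^ (-1 / 2 : ℝ) * (6 - 5 * x) ^ (-3 / 2 : ℝ))) := by
    simp [fullFam, innerFam, famA, famB, famC]
  rw [hful]
  unfold g
  have hs : Real.sqrt ((x + 2) * (6 - 5 * x) ^ 3)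
      = (x + 2) ^ (1 / 2 : ℝ) * (6 - 5 * x) ^ (3 / 2 : ℝ) := by
    rw [Real.sqrt_mul hx1.le, Real.sqrt_eq_rpow, Real.sqrt_eq_rpow,
      ← Real.rpow_natCast (6 - 5 * x) 3, ← Real.rpow_mul hx2.le]
    norm_num
  rw [hs]
  rw [show (-1 / 2 : ℝ) = -(1 / 2) by norm_num, show (-3 / 2 : ℝ) = -(3 / 2) by norm_num,
    Real.rpow_neg hx1.le, Real.rpow_neg hx2.le]
  have h1 : (x + 2) ^ (1 / 2 : ℝ) ≠ 0 := (Real.rpow_pos_of_pos hx1 _).ne'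
  have h2 : (6 - 5 * x) ^ (3 / 2 : ℝ) ≠ 0 := (Real.rpow_pos_of_pos hx2 _).ne'
  field_simp

lemma nat_id (n k i j : ℕ) (hk : k ≤ n) (hj : j = n - k - i) (hi : i ≤ n - k) :
    n.choose k * (n + 1).descFactorial k * ((n - k).choose i * (i ! * j !))
      = n ! * (n + 1).choose k := by
  have e1 : (n - k).choose i * i ! * j ! = (n - k)! := by
    rw [hj]; exact Nat.choose_mul_factorial_mul_factorial hi
  have e2 : n.choose k * k ! * (n - k)! = n ! := Nat.choose_mul_factorial_mul_factorial hk
  calc n.choose k * (n + 1).descFactorial k * ((n - k).choose i * (i ! * j !))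
      = n.choose k * (k ! * (n + 1).choose k) * ((n - k).choose i * i ! * j !) := by
        rw [Nat.descFactorial_eq_factorial_mul_choose]; ring
    _ = (n.choose k * k ! * (n - k)!) * (n + 1).choose k := by rw [e1]; ring
    _ = n ! * (n + 1).choose k := by rw [e2]

lemma term_eq (n k i : ℕ) (hk : k ≤ n) (hi : i ≤ n - k) :
    1 / ((12 : ℝ) ^ (n + 1) * (n ! : ℝ)) * Real.sqrt 3 * (n.choose k : ℝ) *
        (((n + 1).descFactorial k : ℝ) * (1 : ℝ) ^ (n + 1 - k)) *
        (((n - k).choose i : ℝ)) * famB i 1 * famC (n - k - i) 1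
      = (12 : ℝ)⁻¹ ^ (n + 1) * ((n + 1).choose (n - i - (n - k - i)) : ℝ) *
        genBinom (-1 / 2) i * genBinom (-3 / 2) (n - k - i) * ((3 : ℝ)⁻¹) ^ i
          * (-5 : ℝ) ^ (n - k - i) := by
  set j := n - k - i with hj
  have hkk : n - i - j = k := by omega
  rw [hkk]
  have hB : famB i 1 = (∏ t ∈ Finset.range i, (-1 / 2 - (t : ℝ))) * (3 : ℝ) ^ (-1 / 2 - (i : ℝ)) := by
    unfold famB; norm_num
  have hC : famC j 1 = (∏ t ∈ Finset.range j, (-3 / 2 - (t : ℝ))) * (-5 : ℝ) ^ j := by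
    unfold famC; norm_num
  have hsq : Real.sqrt 3 * (3 : ℝ) ^ (-1 / 2 - (i : ℝ)) = ((3 : ℝ)⁻¹) ^ i := by
    rw [Real.sqrt_eq_rpow, ← Real.rpow_add (by norm_num : (0:ℝ) < 3),
      show (1 / 2 + (-1 / 2 - (i : ℝ))) = -(i : ℝ) by ring,
      Real.rpow_neg (by norm_num : (0:ℝ) ≤ 3), Real.rpow_natCast, inv_pow]
  have key : ((n.choose k : ℝ) * ((n + 1).descFactorial k : ℝ) *
      (((n - k).choose i : ℝ) * ((i ! : ℝ) * (j ! : ℝ)))) = (n ! : ℝ) * ((n + 1).choose k : ℝ) := by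
    exact_mod_cast congrArg (Nat.cast : ℕ → ℝ) (nat_id n k i j hk rfl hi)
  rw [hB, hC, genBinom, genBinom]
  rw [← hsq]
  have hne1 : (i ! : ℝ) ≠ 0 := Nat.cast_ne_zero.2 (Nat.factorial_ne_zero i)
  have hne2 : (j ! : ℝ) ≠ 0 := Nat.cast_ne_zero.2 (Nat.factorial_ne_zero j)
  have hne3 : (n ! : ℝ) ≠ 0 := Nat.cast_ne_zero.2 (Nat.factorial_ne_zero n)
  have hne4 : (12 : ℝ) ^ (n + 1) ≠ 0 := by positivity
  generalize (∏ t ∈ Finset.range i, (-1 / 2 - (t : ℝ))) = Pi at *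
  generalize (∏ t ∈ Finset.range j, (-3 / 2 - (t : ℝ))) = Qj at *
  generalize ((3 : ℝ) ^ (-1 / 2 - (i : ℝ))) = pw at *
  generalize Real.sqrt 3 = sq at *
  field_simp
  have h12 : (12 : ℝ) ^ (n + 1) * (1 / 12) ^ (n + 1) = 1 := by rw [← mul_pow]; norm_num
  linear_combination (sq * Pi * pw * Qj) * key - (sq * Pi * pw * Qj * (n ! : ℝ) * ((n + 1).choose k : ℝ)) * h12

/-- Explicit finite double-sum formula for `ξ_ℓ`. -/
theorem xi_explicit_formula (ℓ : ℕ) (hℓ : 2 ≤ ℓ) :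
    xi ℓ = (12 : ℝ)⁻¹ ^ ℓ *
      ∑ j ∈ Finset.range ℓ, ∑ i ∈ Finset.range (ℓ - j),
        (ℓ.choose (ℓ - 1 - i - j) : ℝ) * genBinom (-1 / 2) i * genBinom (-3 / 2) j
          * ((3 : ℝ)⁻¹) ^ i * (-5 : ℝ) ^ j := by
  obtain ⟨n, rfl⟩ : ∃ n, ℓ = n + 1 := ⟨ℓ - 1, by omega⟩
  have h1 : (1 : ℝ) ∈ Set.Ioo (0 : ℝ) (6 / 5) := by norm_num
  have hg : g (n + 1) =ᶠ[nhds 1] fullFam (n + 1) 0 :=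
    Filter.eventuallyEq_of_mem (isOpen_Ioo.mem_nhds h1) (g_eq_fullFam (n + 1))
  have hxi : xi (n + 1) = 1 / ((12 : ℝ) ^ (n + 1) * (n ! : ℝ)) * fullFam (n + 1) n 1 := by
    rw [xi, Nat.add_sub_cancel, hg.iteratedDeriv_eq n, iteratedDeriv_fullFam (n + 1) n 1 h1]
  rw [hxi]
  simp only [Nat.add_sub_cancel]
  -- expand both sides into double sums
  simp only [fullFam, innerFam, famA, Finset.mul_sum]
  rw [Finset.sum_sigma', Finset.sum_sigma']
  refine Finset.sum_nbij' (fun p => ⟨n - p.1 - p.2, p.2⟩) (fun p => ⟨n - p.1 - p.2, p.2⟩)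
    ?_ ?_ ?_ ?_ ?_
  · intro p hp
    simp only [Finset.mem_sigma, Finset.mem_range] at hp ⊢
    omega
  · intro p hp
    simp only [Finset.mem_sigma, Finset.mem_range] at hp ⊢
    omega
  · intro p hp
    simp only [Finset.mem_sigma, Finset.mem_range] at hp
    ext <;> simp <;> omega
  · intro p hp
    simp only [Finset.mem_sigma, Finset.mem_range] at hp
    ext <;> simp <;> omega
  · intro p hp
    obtain ⟨k, i⟩ := p
    simp only [Finset.mem_sigma, Finset.mem_range] at hp
    have hk : k ≤ n := by omega
    have hi : i ≤ n - k := by omega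
    have := term_eq n k i hk hi
    linear_combination this
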